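/- The open unit disk 𝔻 = {z ∈ ℂ : |z| < 1} with Möbius addition a ⊕ b = (a + b)/(1 + conj(a)·b) is a gyrogroup, with gyration given by gyr[a,b](c) = ((1 + a·conj(b))/(1 + conj(a)·b))·c. -/

import Mathlib

open Filter Topology

class Gyrogroup (G : Type*) where
  add : G → G → G
  zero : G
  neg : G → G
  gyr : G → G → G → G
  zero_add : ∀ a, add zero a = a
  add_zero : ∀ a, add a zero = a
  zero_unique : ∀ z : G, (∀ a, add z a = a ∧ add a z = a) → z = zero
  neg_add : ∀ a, add (neg a) a = zero
  add_neg : ∀ a, add a (neg a) = zero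
  neg_unique : ∀ x y : G, add y x = zero → add x y = zero → y = neg x
  gyr_add : ∀ x y a b, gyr x y (add a b) = add (gyr x y a) (gyr x y b)
  gyr_bijective : ∀ x y, Function.Bijective (gyr x y)
  gyroassoc : ∀ x y z, add x (add y z) = add (add x y) (gyr x y z)
  loop : ∀ x y, gyr (add x y) y = gyr x y

namespace Gyrogroup

variable {G : Type*} [Gyrogroup G]

/-- Elementwise sum of two subsets: `A ⊕ B = {a ⊕ b : a ∈ A, b ∈ B}`. -/
def sAdd (A B : Set G) : Set G := Set.image2 add A B

/-- Elementwise inverse of a subset: `⊖A = {⊖a : a ∈ A}`. -/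
def sNeg (A : Set G) : Set G := neg '' A

/-- The left coset `x ⊕ H`. -/
def lcoset (x : G) (H : Set G) : Set G := (fun h => add x h) '' H

/-- The setoid identifying points with equal left cosets; `Quotient` of it is `G/H`. -/
def cosetSetoid (G : Type*) [Gyrogroup G] (H : Set G) : Setoid G :=
  ⟨fun x y => lcoset x H = lcoset y H,
    ⟨fun _ => rfl, fun h => h.symm, fun h1 h2 => h1.trans h2⟩⟩

end Gyrogroup

/-- A (Hausdorff) topological gyrogroup: `⊕` is jointly continuous and `⊖` is continuous. -/
class TopologicalGyrogroup (G : Type*) [TopologicalSpace G] extends Gyrogroup G where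
  t2 : T2Space G
  continuous_add : Continuous fun p : G × G => add p.1 p.2
  continuous_neg : Continuous neg


namespace MobiusAux
open Complex

lemma den_ne (a b : ℂ) (ha : ‖a‖ < 1) (hb : ‖b‖ < 1) :
    1 + (starRingEnd ℂ) a * b ≠ 0 := by
  intro h
  have h1 : (starRingEnd ℂ) a * b = -1 := by linear_combination h
  have h2 : ‖(starRingEnd ℂ) a * b‖ = 1 := by rw [h1]; simp
  rw [norm_mul, Complex.norm_conj] at h2
  nlinarith [norm_nonneg a, norm_nonneg b]

lemma den_ne' (a b : ℂ) (ha : ‖a‖ < 1) (hb : ‖b‖ < 1) :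
    1 + a * (starRingEnd ℂ) b ≠ 0 := by
  have := den_ne b a hb ha
  rwa [mul_comm] at this

lemma normSq_key (a b : ℂ) :
    normSq (1 + (starRingEnd ℂ) a * b) - normSq (a + b)
      = (1 - normSq a) * (1 - normSq b) := by
  simp [normSq_apply, mul_re, mul_im, add_re, add_im]
  ring

lemma mem_add (a b : ℂ) (ha : ‖a‖ < 1) (hb : ‖b‖ < 1) :
    ‖(a + b) / (1 + (starRingEnd ℂ) a * b)‖ < 1 := by
  rw [norm_div, div_lt_one]
  · rw [Complex.norm_def, Complex.norm_def]
    apply Real.sqrt_lt_sqrt (normSq_nonneg _)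
    have h := normSq_key a b
    have ha' : normSq a < 1 := by
      rw [← Complex.sq_norm]; nlinarith [norm_nonneg a]
    have hb' : normSq b < 1 := by
      rw [← Complex.sq_norm]; nlinarith [norm_nonneg b]
    nlinarith
  · exact norm_pos_iff.mpr (den_ne a b ha hb)

lemma abs_u (a b : ℂ) (ha : ‖a‖ < 1) (hb : ‖b‖ < 1) :
    ‖(1 + a * (starRingEnd ℂ) b) / (1 + (starRingEnd ℂ) a * b)‖ = 1 := by
  rw [norm_div]
  have : 1 + a * (starRingEnd ℂ) b = (starRingEnd ℂ) (1 + (starRingEnd ℂ) a * b) := by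
    simp [map_add, map_mul, mul_comm]
  rw [this, Complex.norm_conj, div_self (norm_ne_zero_iff.mpr (den_ne a b ha hb))]

lemma mem_gyr (a b c : ℂ) (ha : ‖a‖ < 1) (hb : ‖b‖ < 1)
    (hc : ‖c‖ < 1) :
    ‖(1 + a * (starRingEnd ℂ) b) / (1 + (starRingEnd ℂ) a * b) * c‖ < 1 := by
  rw [norm_mul, abs_u a b ha hb, one_mul]; exact hc

abbrev D := {z : ℂ // ‖z‖ < 1}

noncomputable def mAdd (a b : D) : D :=
  ⟨((a : ℂ) + b) / (1 + (starRingEnd ℂ) (a : ℂ) * b), mem_add a b a.2 b.2⟩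

noncomputable def mGyr (a b c : D) : D :=
  ⟨(1 + (a : ℂ) * (starRingEnd ℂ) (b : ℂ)) / (1 + (starRingEnd ℂ) (a : ℂ) * b) * c,
    mem_gyr a b c a.2 b.2 c.2⟩

def mZero : D := ⟨0, by simp⟩
def mNeg (a : D) : D := ⟨-(a : ℂ), by simpa using a.2⟩

lemma conj_lt (a : D) : ‖(starRingEnd ℂ) (a : ℂ)‖ < 1 := by
  simpa using a.2


lemma div_div_same (a b c : ℂ) (hc : c ≠ 0) : (a / c) / (b / c) = a / b := by
  rcases eq_or_ne b 0 with rfl | hb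
  · simp
  · field_simp

lemma massoc (x y z : ℂ) (hQ : 1 + (starRingEnd ℂ) x * y ≠ 0)
    (hP : 1 + x * (starRingEnd ℂ) y ≠ 0)
    (hd : 1 + (starRingEnd ℂ) y * z ≠ 0)
    (hD1 : 1 + (starRingEnd ℂ) x * ((y + z) / (1 + (starRingEnd ℂ) y * z)) ≠ 0)
    (hD2 : 1 + (starRingEnd ℂ) ((x + y) / (1 + (starRingEnd ℂ) x * y)) *
      ((1 + x * (starRingEnd ℂ) y) / (1 + (starRingEnd ℂ) x * y) * z) ≠ 0) :
    (x + (y + z) / (1 + (starRingEnd ℂ) y * z)) /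
      (1 + (starRingEnd ℂ) x * ((y + z) / (1 + (starRingEnd ℂ) y * z)))
    = ((x + y) / (1 + (starRingEnd ℂ) x * y) +
        (1 + x * (starRingEnd ℂ) y) / (1 + (starRingEnd ℂ) x * y) * z) /
      (1 + (starRingEnd ℂ) ((x + y) / (1 + (starRingEnd ℂ) x * y)) *
        ((1 + x * (starRingEnd ℂ) y) / (1 + (starRingEnd ℂ) x * y) * z)) := by
  set d : ℂ := 1 + (starRingEnd ℂ) y * z with hd_def
  set Q : ℂ := 1 + (starRingEnd ℂ) x * y with hQ_def
  set P : ℂ := 1 + x * (starRingEnd ℂ) y with hP_def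
  have e1 : x + (y + z) / d = (x * d + (y + z)) / d := by field_simp
  have e2 : 1 + (starRingEnd ℂ) x * ((y + z) / d)
      = (d + (starRingEnd ℂ) x * (y + z)) / d := by field_simp
  have hD1' : d + (starRingEnd ℂ) x * (y + z) ≠ 0 := by
    intro h; rw [e2, h, zero_div] at hD1; exact hD1 rfl
  have e4 : (starRingEnd ℂ) ((x + y) / Q)
      = ((starRingEnd ℂ) x + (starRingEnd ℂ) y) / P := by
    rw [map_div₀]; simp [hQ_def, hP_def, mul_comm]
  have e3 : (x + y) / Q + P / Q * z = ((x + y) + P * z) / Q := by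
    rw [div_mul_eq_mul_div, ← add_div]
  have e5 : 1 + ((starRingEnd ℂ) x + (starRingEnd ℂ) y) / P * (P / Q * z)
      = (Q + ((starRingEnd ℂ) x + (starRingEnd ℂ) y) * z) / Q := by
    field_simp
  have hD2' : Q + ((starRingEnd ℂ) x + (starRingEnd ℂ) y) * z ≠ 0 := by
    intro h; rw [e4, e5, h, zero_div] at hD2; exact hD2 rfl
  rw [e1, e2, div_div_same _ _ _ hd, e4, e3, e5, div_div_same _ _ _ hQ,
    div_eq_div_iff hD1' hD2']
  simp only [hd_def, hQ_def, hP_def]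
  ring

lemma mloop (x y c : ℂ) (hQ : 1 + (starRingEnd ℂ) x * y ≠ 0)
    (hP : 1 + x * (starRingEnd ℂ) y ≠ 0)
    (hD : 1 + (starRingEnd ℂ) ((x + y) / (1 + (starRingEnd ℂ) x * y)) * y ≠ 0) :
    (1 + (x + y) / (1 + (starRingEnd ℂ) x * y) * (starRingEnd ℂ) y) /
      (1 + (starRingEnd ℂ) ((x + y) / (1 + (starRingEnd ℂ) x * y)) * y) * c
    = (1 + x * (starRingEnd ℂ) y) / (1 + (starRingEnd ℂ) x * y) * c := by
  set Q : ℂ := 1 + (starRingEnd ℂ) x * y with hQ_def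
  set P : ℂ := 1 + x * (starRingEnd ℂ) y with hP_def
  have e4 : (starRingEnd ℂ) ((x + y) / Q)
      = ((starRingEnd ℂ) x + (starRingEnd ℂ) y) / P := by
    rw [map_div₀]; simp [hQ_def, hP_def, mul_comm]
  have e6 : 1 + (x + y) / Q * (starRingEnd ℂ) y
      = (Q + (x + y) * (starRingEnd ℂ) y) / Q := by field_simp
  have e7 : 1 + ((starRingEnd ℂ) x + (starRingEnd ℂ) y) / P * y
      = (P + ((starRingEnd ℂ) x + (starRingEnd ℂ) y) * y) / P := by field_simp
  have h8 : Q + (x + y) * (starRingEnd ℂ) y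
      = P + ((starRingEnd ℂ) x + (starRingEnd ℂ) y) * y := by
    simp only [hQ_def, hP_def]; ring
  have hM : P + ((starRingEnd ℂ) x + (starRingEnd ℂ) y) * y ≠ 0 := by
    intro h; rw [e4, e7, h, zero_div] at hD; exact hD rfl
  rw [e4, e6, e7, h8]
  congr 1
  rcases eq_or_ne (P + ((starRingEnd ℂ) x + (starRingEnd ℂ) y) * y) 0 with h | h
  · exact absurd h hM
  · field_simp

set_option maxHeartbeats 4000000 in
noncomputable instance gInst : Gyrogroup D where
  add := mAdd
  zero := mZero
  neg := mNeg
  gyr := mGyr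
  zero_add a := by
    apply Subtype.ext
    show ((0 : ℂ) + a) / (1 + (starRingEnd ℂ) (0:ℂ) * a) = (a : ℂ)
    simp
  add_zero a := by
    apply Subtype.ext
    show ((a : ℂ) + 0) / (1 + (starRingEnd ℂ) (a:ℂ) * 0) = (a : ℂ)
    simp
  zero_unique z h := by
    have h1 : mAdd z mZero = mZero := (h mZero).1
    have h2 : mAdd z mZero = z := by
      apply Subtype.ext
      show ((z : ℂ) + 0) / (1 + (starRingEnd ℂ) (z:ℂ) * 0) = (z : ℂ)
      simp
    rw [h2] at h1; exact h1
  neg_add a := by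
    apply Subtype.ext
    show (-(a : ℂ) + a) / (1 + (starRingEnd ℂ) (-(a:ℂ)) * a) = (0 : ℂ)
    simp
  add_neg a := by
    apply Subtype.ext
    show ((a : ℂ) + -(a:ℂ)) / (1 + (starRingEnd ℂ) ((a:ℂ)) * -(a:ℂ)) = (0 : ℂ)
    simp
  neg_unique x y h1 h2 := by
    apply Subtype.ext
    have h1' : ((y:ℂ) + x) / (1 + (starRingEnd ℂ) (y:ℂ) * x) = 0 := congrArg Subtype.val h1
    rw [div_eq_zero_iff] at h1'
    rcases h1' with h | h
    · exact eq_neg_of_add_eq_zero_left h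
    · exact absurd h (den_ne _ _ y.2 x.2)
  gyr_add x y a b := by
    apply Subtype.ext
    show (1 + (x:ℂ) * (starRingEnd ℂ) (y:ℂ)) / (1 + (starRingEnd ℂ) (x:ℂ) * y) *
        (((a:ℂ) + b) / (1 + (starRingEnd ℂ) (a:ℂ) * b)) = _
    show _ = ((mGyr x y a : D) + (mGyr x y b : D) : ℂ) /
        (1 + (starRingEnd ℂ) ((mGyr x y a : D) : ℂ) * ((mGyr x y b : D) : ℂ))
    simp only [mGyr]
    have h1 := den_ne (x:ℂ) y x.2 y.2
    have h2 := den_ne' (x:ℂ) y x.2 y.2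
    have h3 := den_ne (a:ℂ) b a.2 b.2
    set u : ℂ := (1 + (x:ℂ) * (starRingEnd ℂ) (y:ℂ)) / (1 + (starRingEnd ℂ) (x:ℂ) * y) with hu_def
    have hcu : (starRingEnd ℂ) u = (1 + (starRingEnd ℂ) (x:ℂ) * y) / (1 + (x:ℂ) * (starRingEnd ℂ) (y:ℂ)) := by
      rw [hu_def, map_div₀]; simp [mul_comm]
    have hu1 : (starRingEnd ℂ) u * u = 1 := by
      rw [hcu, hu_def]; field_simp
    have key : 1 + (starRingEnd ℂ) (u * a) * (u * b) = 1 + (starRingEnd ℂ) (a:ℂ) * b := by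
      rw [map_mul]
      have : (starRingEnd ℂ) u * (starRingEnd ℂ) (a:ℂ) * (u * b)
          = ((starRingEnd ℂ) u * u) * ((starRingEnd ℂ) (a:ℂ) * b) := by ring
      rw [this, hu1, one_mul]
    rw [key, ← mul_div_assoc, mul_add]
  gyr_bijective x y := by
    constructor
    · intro a b h
      apply Subtype.ext
      have h' := congrArg Subtype.val h
      simp only [mGyr] at h'
      have hu : (1 + (x:ℂ) * (starRingEnd ℂ) (y:ℂ)) / (1 + (starRingEnd ℂ) (x:ℂ) * y) ≠ 0 :=
        div_ne_zero (den_ne' (x:ℂ) y x.2 y.2) (den_ne (x:ℂ) y x.2 y.2)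
      exact mul_left_cancel₀ hu h'
    · intro c
      have hP : (1 + (x:ℂ) * (starRingEnd ℂ) (y:ℂ)) ≠ 0 := den_ne' (x:ℂ) y x.2 y.2
      have hQ : (1 + (starRingEnd ℂ) (x:ℂ) * y) ≠ 0 := den_ne (x:ℂ) y x.2 y.2
      have hQP : ‖1 + (starRingEnd ℂ) (x:ℂ) * y‖
          = ‖1 + (x:ℂ) * (starRingEnd ℂ) (y:ℂ)‖ := by
        rw [show (1 + (x:ℂ) * (starRingEnd ℂ) (y:ℂ))
            = (starRingEnd ℂ) (1 + (starRingEnd ℂ) (x:ℂ) * y) by simp [mul_comm],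
          Complex.norm_conj]
      have hu : ‖(1 + (starRingEnd ℂ) (x:ℂ) * y) / (1 + (x:ℂ) * (starRingEnd ℂ) (y:ℂ)) * c‖ < 1 := by
        rw [norm_mul, norm_div, hQP, div_self (norm_ne_zero_iff.mpr hP), one_mul]
        exact c.2
      refine ⟨⟨_, hu⟩, ?_⟩
      apply Subtype.ext
      simp only [mGyr]
      have hPQ : (1 + (x:ℂ) * (starRingEnd ℂ) (y:ℂ)) / (1 + (starRingEnd ℂ) (x:ℂ) * y) *
          ((1 + (starRingEnd ℂ) (x:ℂ) * y) / (1 + (x:ℂ) * (starRingEnd ℂ) (y:ℂ))) = 1 := by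
        field_simp
      calc (1 + (x:ℂ) * (starRingEnd ℂ) (y:ℂ)) / (1 + (starRingEnd ℂ) (x:ℂ) * y) *
            ((1 + (starRingEnd ℂ) (x:ℂ) * y) / (1 + (x:ℂ) * (starRingEnd ℂ) (y:ℂ)) * c)
          = ((1 + (x:ℂ) * (starRingEnd ℂ) (y:ℂ)) / (1 + (starRingEnd ℂ) (x:ℂ) * y) *
            ((1 + (starRingEnd ℂ) (x:ℂ) * y) / (1 + (x:ℂ) * (starRingEnd ℂ) (y:ℂ)))) * c := by ring
        _ = (c : ℂ) := by rw [hPQ, one_mul]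
  gyroassoc x y z := by
    apply Subtype.ext
    show ((x:ℂ) + ((mAdd y z : D) : ℂ)) / (1 + (starRingEnd ℂ) (x:ℂ) * ((mAdd y z : D):ℂ)) = _
    show _ = (((mAdd x y : D):ℂ) + ((mGyr x y z : D):ℂ)) /
        (1 + (starRingEnd ℂ) ((mAdd x y : D):ℂ) * ((mGyr x y z : D):ℂ))
    simp only [mAdd, mGyr]
    have h1 := den_ne (x:ℂ) y x.2 y.2
    have h2 := den_ne' (x:ℂ) y x.2 y.2
    have h3 := den_ne (y:ℂ) z y.2 z.2
    have h4 := den_ne (x:ℂ) (mAdd y z) x.2 (mAdd y z).2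
    have h5 := den_ne (mAdd x y) (mGyr x y z) (mAdd x y).2 (mGyr x y z).2
    simp only [mAdd, mGyr] at h4 h5
    exact massoc (x:ℂ) y z h1 h2 h3 h4 h5
  loop x y := by
    funext c
    apply Subtype.ext
    simp only [mGyr, mAdd]
    have h1 := den_ne (x:ℂ) y x.2 y.2
    have h2 := den_ne' (x:ℂ) y x.2 y.2
    have h3 := den_ne (mAdd x y) y (mAdd x y).2 y.2
    simp only [mAdd] at h3
    exact mloop (x:ℂ) y c h1 h2 h3

end MobiusAux

/-- The open unit disk with Möbius addition is a gyrogroup, with gyration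
`gyr[a,b](c) = ((1 + a·conj b)/(1 + conj a·b))·c`. -/
theorem mobius_gyrogroup :
    ∃ inst : Gyrogroup {z : ℂ // ‖z‖ < 1},
      (∀ a b : {z : ℂ // ‖z‖ < 1},
        ((@Gyrogroup.add _ inst a b : {z : ℂ // ‖z‖ < 1}) : ℂ) =
          ((a : ℂ) + (b : ℂ)) / (1 + (starRingEnd ℂ) (a : ℂ) * (b : ℂ))) ∧
      (∀ a b c : {z : ℂ // ‖z‖ < 1},
        ((@Gyrogroup.gyr _ inst a b c : {z : ℂ // ‖z‖ < 1}) : ℂ) =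
          ((1 + (a : ℂ) * (starRingEnd ℂ) (b : ℂ)) /
            (1 + (starRingEnd ℂ) (a : ℂ) * (b : ℂ))) * (c : ℂ)) :=
  ⟨MobiusAux.gInst, fun _ _ => rfl, fun _ _ _ => rfl⟩
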